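/- For any θ, x ∈ ℝ^d, y ∈ ℝ and ε ≥ 0, the supremum of ((x+z)ᵀθ − y)² over z ∈ ℝ^d with ‖z‖₂ ≤ ε equals (|xᵀθ − y| + ε‖θ‖₂)². Moreover, if θ ≠ 0 and xᵀθ ≠ y, this supremum is attained at z* = ε·sgn(xᵀθ − y)·θ/‖θ‖₂. -/

import Mathlib

open MeasureTheory ProbabilityTheory Real Filter Matrix
open scoped RealInnerProductSpace BigOperators NNReal ENNReal Topology

lemma sign_mul_self_abs (c : ℝ) : Real.sign c * c = |c| := by
  rcases lt_trichotomy c 0 with h | h | h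
  · rw [Real.sign_of_neg h, abs_of_neg h]; ring
  · simp [h]
  · rw [Real.sign_of_pos h, abs_of_pos h]; ring

lemma l2_attack_aux {d : ℕ} (θ x : EuclideanSpace ℝ (Fin d)) (y ε : ℝ) (hε : 0 ≤ ε)
    (hθ : θ ≠ 0) (s : ℝ) (hs2 : s * s = 1) (hsc : s * (⟪θ, x⟫ - y) = |⟪θ, x⟫ - y|) :
    (ε * s / ‖θ‖) • θ ∈ Metric.closedBall (0 : EuclideanSpace ℝ (Fin d)) ε ∧
    (⟪θ, x + (ε * s / ‖θ‖) • θ⟫ - y) ^ 2 = (|⟪θ, x⟫ - y| + ε * ‖θ‖) ^ 2 := by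
  have hθn : ‖θ‖ ≠ 0 := norm_ne_zero_iff.mpr hθ
  have hθnn : (0:ℝ) < ‖θ‖ := norm_pos_iff.mpr hθ
  have habs : |s| = 1 := by
    rcases mul_self_eq_one_iff.mp hs2 with h | h <;> rw [h] <;> norm_num
  constructor
  · rw [Metric.mem_closedBall, dist_zero_right, norm_smul]
    rw [Real.norm_eq_abs, abs_div, abs_mul, abs_of_nonneg hε, habs, abs_norm]
    field_simp
    exact le_rfl
  · have hinner : ⟪θ, x + (ε * s / ‖θ‖) • θ⟫ = ⟪θ, x⟫ + ε * s * ‖θ‖ := by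
      rw [inner_add_right, real_inner_smul_right, real_inner_self_eq_norm_sq]
      field_simp
    rw [hinner]
    linear_combination ((⟪θ, x⟫ - y) * s + |⟪θ, x⟫ - y| + 2 * ε * ‖θ‖) * hsc +
      (ε ^ 2 * ‖θ‖ ^ 2 - (⟪θ, x⟫ - y) ^ 2) * hs2

/-- For any `θ, x ∈ ℝ^d`, `y ∈ ℝ` and `ε ≥ 0`, the supremum of
`((x+z)ᵀθ − y)²` over `‖z‖₂ ≤ ε` equals `(|xᵀθ − y| + ε‖θ‖₂)²` (and it is attained, i.e. it is
the greatest value); moreover, if `θ ≠ 0` and `xᵀθ ≠ y`, it is attained at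
`z* = ε·sgn(xᵀθ − y)·θ/‖θ‖₂`. -/
theorem l2_attack_closed_form
    {d : ℕ} (hd : 1 ≤ d) (θ x : EuclideanSpace ℝ (Fin d)) (y ε : ℝ) (hε : 0 ≤ ε) :
    IsGreatest ((fun z => (⟪θ, x + z⟫ - y) ^ 2) '' Metric.closedBall 0 ε)
      ((|⟪θ, x⟫ - y| + ε * ‖θ‖) ^ 2) ∧
    (θ ≠ 0 → ⟪θ, x⟫ ≠ y →
      (ε * Real.sign (⟪θ, x⟫ - y) / ‖θ‖) • θ ∈
          Metric.closedBall (0 : EuclideanSpace ℝ (Fin d)) ε ∧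
      (⟪θ, x + (ε * Real.sign (⟪θ, x⟫ - y) / ‖θ‖) • θ⟫ - y) ^ 2
        = (|⟪θ, x⟫ - y| + ε * ‖θ‖) ^ 2) := by
  set c := ⟪θ, x⟫ - y with hc
  constructor
  · constructor
    · -- membership: attained
      by_cases hθ : θ = 0
      · refine ⟨0, ?_, ?_⟩
        · simp [hε]
        · simp [hθ, hc, sq_abs]
      · set s : ℝ := if c = 0 then 1 else Real.sign c with hs
        have hs2 : s * s = 1 := by
          by_cases h0 : c = 0
          · simp [hs, h0]
          · simp only [hs, if_neg h0]
            rcases Real.sign_apply_eq_of_ne_zero c h0 with h | h <;> rw [h] <;> norm_num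
        have hsc : s * c = |c| := by
          by_cases h0 : c = 0
          · simp [hs, h0]
          · simp only [hs, if_neg h0]
            exact sign_mul_self_abs c
        obtain ⟨hmem, heq⟩ := l2_attack_aux θ x y ε hε hθ s hs2 hsc
        exact ⟨_, hmem, heq⟩
    · rintro v ⟨z, hz, rfl⟩
      rw [Metric.mem_closedBall, dist_zero_right] at hz
      have h1 : |⟪θ, x + z⟫ - y| ≤ |c| + ε * ‖θ‖ := by
        rw [inner_add_right]
        calc |⟪θ, x⟫ + ⟪θ, z⟫ - y| = |c + ⟪θ, z⟫| := by rw [hc]; ring_nf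
          _ ≤ |c| + |⟪θ, z⟫| := abs_add_le _ _
          _ ≤ |c| + ε * ‖θ‖ := by
              have := abs_real_inner_le_norm θ z
              have h2 : ‖θ‖ * ‖z‖ ≤ ε * ‖θ‖ := by nlinarith [norm_nonneg θ]
              linarith
      calc (⟪θ, x + z⟫ - y) ^ 2 = |⟪θ, x + z⟫ - y| ^ 2 := (sq_abs _).symm
        _ ≤ (|c| + ε * ‖θ‖) ^ 2 := by
            have h0 : (0:ℝ) ≤ |⟪θ, x + z⟫ - y| := abs_nonneg _
            nlinarith
  · intro hθ hne
    have hcne : c ≠ 0 := sub_ne_zero.mpr hne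
    have hs2 : Real.sign c * Real.sign c = 1 := by
      rcases Real.sign_apply_eq_of_ne_zero c hcne with h | h <;> rw [h] <;> norm_num
    have hsc : Real.sign c * c = |c| := sign_mul_self_abs c
    exact l2_attack_aux θ x y ε hε hθ (Real.sign c) hs2 hsc
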